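/- Fix Ω₁ > 0 and α > 0, and suppose ε > 0 satisfies 4ε^α < √π Ω₁. Set R_ε = √(1 − 4ε^α/(√π Ω₁)). Then the function ρ^TF_ε(x) = (Ω₁²/(8ε^{2α})) · max(0, |x|² − R_ε²) is nonnegative with ∫_{B₁} ρ^TF_ε = 1, it is the unique minimizer of the functional 𝓔^TF_ε[ρ] = ε^{2α} ∫_{B₁}(ρ(x)² − Ω₁²|x|²ρ(x)/(4ε^{2α}))dx over ρ ∈ L²(B₁) with ρ ≥ 0 a.e. and ∫_{B₁}ρ = 1, and the minimum value is E^TF_ε = −(Ω₁²/4)(1 − 8ε^α/(3√π Ω₁)). -/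

import Mathlib

open MeasureTheory Real Filter

noncomputable section

/-- Points of the plane. -/
abbrev Pt : Type := EuclideanSpace ℝ (Fin 2)

/-- The open unit disc. -/
def B1 : Set Pt := Metric.ball 0 1

/-- First partial derivative of a complex-valued function. -/
def pd1 (Ψ : Pt → ℂ) (x : Pt) : ℂ := fderiv ℝ Ψ x (EuclideanSpace.single 0 1)

/-- Second partial derivative of a complex-valued function. -/
def pd2 (Ψ : Pt → ℂ) (x : Pt) : ℂ := fderiv ℝ Ψ x (EuclideanSpace.single 1 1)

/-- Angular momentum operator `L = -i (x₁ ∂₂ - x₂ ∂₁)`. -/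
def angMom (Ψ : Pt → ℂ) (x : Pt) : ℂ :=
  -Complex.I * ((x 0 : ℂ) * pd2 Ψ x - (x 1 : ℂ) * pd1 Ψ x)

/-- The Gross-Pitaevskii energy density `|∇Ψ|² - Ω conj(Ψ) LΨ + |Ψ|⁴/ε²`. -/
def gpDensity (ε Ω : ℝ) (Ψ : Pt → ℂ) (x : Pt) : ℝ :=
  ‖pd1 Ψ x‖ ^ 2 + ‖pd2 Ψ x‖ ^ 2
    - Ω * (starRingEnd ℂ (Ψ x) * angMom Ψ x).re
    + ‖Ψ x‖ ^ 4 / ε ^ 2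

/-- The Gross-Pitaevskii functional on the unit disc. -/
def gpEnergy (ε Ω : ℝ) (Ψ : Pt → ℂ) : ℝ := ∫ x in B1, gpDensity ε Ω Ψ x

/-- Admissible (H¹, normalized) wave functions. -/
def gpAdm (Ψ : Pt → ℂ) : Prop :=
  DifferentiableOn ℝ Ψ B1 ∧
  IntegrableOn (fun x => ‖Ψ x‖ ^ 2) B1 ∧
  IntegrableOn (fun x => ‖pd1 Ψ x‖ ^ 2 + ‖pd2 Ψ x‖ ^ 2) B1 ∧
  IntegrableOn (fun x => ‖Ψ x‖ ^ 4) B1 ∧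
  IntegrableOn (fun x => (starRingEnd ℂ (Ψ x) * angMom Ψ x).re) B1 ∧
  (∫ x in B1, ‖Ψ x‖ ^ 2) = 1

/-- The GP ground-state energy: infimum of the functional over normalized functions. -/
def gpGround (ε Ω : ℝ) : ℝ := sInf {E | ∃ Ψ : Pt → ℂ, gpAdm Ψ ∧ E = gpEnergy ε Ω Ψ}

/-- A GP minimizer: a normalized admissible function attaining the infimum. -/
def IsGPMinimizer (ε Ω : ℝ) (Ψ : Pt → ℂ) : Prop :=
  gpAdm Ψ ∧ gpEnergy ε Ω Ψ = gpGround ε Ω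

/-- The Thomas-Fermi functional. -/
def tfEnergy (Ω₀ : ℝ) (ρ : Pt → ℝ) : ℝ :=
  ∫ x in B1, ((ρ x) ^ 2 - Ω₀ ^ 2 * ‖x‖ ^ 2 * ρ x / 4)

/-- Admissible TF densities: nonnegative, in L²(B₁), of total mass one. -/
def tfAdm (ρ : Pt → ℝ) : Prop :=
  IntegrableOn ρ B1 ∧ IntegrableOn (fun x => (ρ x) ^ 2) B1 ∧
  (∀ᵐ x ∂(volume.restrict B1), 0 ≤ ρ x) ∧ (∫ x in B1, ρ x) = 1

/-- The TF ground-state energy. -/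
def tfGround (Ω₀ : ℝ) : ℝ := sInf {E | ∃ ρ : Pt → ℝ, tfAdm ρ ∧ E = tfEnergy Ω₀ ρ}

/-- Radius of the TF "hole". -/
def R0 (Ω₀ : ℝ) : ℝ := Real.sqrt (1 - 4 / (Real.sqrt π * Ω₀))

/-- The TF minimizer. -/
def rhoTF (Ω₀ : ℝ) (x : Pt) : ℝ :=
  if Ω₀ ≤ 4 / Real.sqrt π then 1 / π - Ω₀ ^ 2 / 16 * (1 - 2 * ‖x‖ ^ 2)
  else max 0 (Ω₀ ^ 2 / 8 * (‖x‖ ^ 2 - 1) + Ω₀ / (2 * Real.sqrt π))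

/-- Inner radius of the support of the TF minimizer in the rapid-rotation regime. -/
def Reps (Ω₁ α ε : ℝ) : ℝ := Real.sqrt (1 - 4 * ε ^ α / (Real.sqrt π * Ω₁))

/-- The TF minimizer in the rapid-rotation regime. -/
def rhoTFeps (Ω₁ α ε : ℝ) (x : Pt) : ℝ :=
  Ω₁ ^ 2 / (8 * ε ^ (2 * α)) * max 0 (‖x‖ ^ 2 - (Reps Ω₁ α ε) ^ 2)

/-- The TF functional of the rapid-rotation regime. -/
def tfEpsEnergy (Ω₁ α ε : ℝ) (ρ : Pt → ℝ) : ℝ :=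
  ε ^ (2 * α) * ∫ x in B1, ((ρ x) ^ 2 - Ω₁ ^ 2 * ‖x‖ ^ 2 * ρ x / (4 * ε ^ (2 * α)))


open Set Metric
set_option maxHeartbeats 1000000

lemma volume_B1 : (volume B1).toReal = π := by
  rw [B1, EuclideanSpace.volume_ball]
  simp only [Fintype.card_fin]
  rw [show ((2:ℕ):ℝ)/2 + 1 = 2 by norm_num, Real.Gamma_two]
  rw [sq_sqrt Real.pi_nonneg]
  simp [ENNReal.toReal_ofReal Real.pi_nonneg]

lemma radial_int (g : ℝ → ℝ) :
    ∫ x in B1, g ‖x‖ = 2 * π * ∫ y in (0:ℝ)..1, y * g y := by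
  have h1 : ∫ x in B1, g ‖x‖ = ∫ x : Pt, (fun r : ℝ => if r < 1 then g r else 0) ‖x‖ := by
    rw [B1, ← integral_indicator (measurableSet_ball)]
    congr 1
    funext x
    simp only [Set.indicator, Metric.mem_ball, dist_zero_right]
  rw [h1, integral_fun_norm_addHaar volume (fun r : ℝ => if r < 1 then g r else 0)]
  have hdim : Module.finrank ℝ Pt = 2 := finrank_euclideanSpace_fin
  rw [hdim]
  have h2 : ∫ y in Set.Ioi (0:ℝ), y ^ (2-1) • (if y < 1 then g y else 0)
      = ∫ y in (0:ℝ)..1, y * g y := by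
    have : ∀ y : ℝ, y ^ (2-1) • (if y < 1 then g y else 0)
        = Set.indicator (Set.Iio 1) (fun y => y * g y) y := by
      intro y
      simp only [pow_one, smul_eq_mul, Set.indicator, Set.mem_Iio]
      split_ifs <;> ring
    rw [show (fun y : ℝ => y ^ (2-1) • (if y < 1 then g y else 0)) = _ from funext this]
    rw [setIntegral_indicator measurableSet_Iio, Set.Ioi_inter_Iio,
      intervalIntegral.integral_of_le zero_le_one, integral_Ioc_eq_integral_Ioo]
  rw [h2, show volume.real (Metric.ball (0:Pt) 1) = π from volume_B1]
  simp only [smul_eq_mul, nsmul_eq_mul]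
  ring


lemma split_int (f : ℝ → ℝ) (hf : Continuous f) (s : ℝ) (h0 : 0 ≤ s) (h1 : s ≤ 1) :
    ∫ y in (0:ℝ)..1, y * max 0 (y^2 - s) * f (y^2)
      = ∫ y in (Real.sqrt s)..1, (y * (y^2 - s) * f (y^2)) := by
  set r0 := Real.sqrt s with hr0def
  have hr0 : r0^2 = s := Real.sq_sqrt h0
  have hr0a : 0 ≤ r0 := Real.sqrt_nonneg s
  have hr0b : r0 ≤ 1 := Real.sqrt_le_one.mpr h1
  have hc : Continuous fun y : ℝ => y * max 0 (y^2 - s) * f (y^2) := by fun_prop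
  have hsplit := intervalIntegral.integral_add_adjacent_intervals
    (hc.intervalIntegrable (μ := volume) 0 r0) (hc.intervalIntegrable (μ := volume) r0 1)
  rw [← hsplit]
  have e1 : ∫ y in (0:ℝ)..r0, y * max 0 (y^2 - s) * f (y^2) = 0 := by
    rw [intervalIntegral.integral_congr (g := fun _ => (0:ℝ)) ?_, intervalIntegral.integral_const,
      smul_zero]
    intro y hy
    rw [Set.uIcc_of_le hr0a] at hy
    have : y^2 ≤ s := by nlinarith [hy.1, hy.2]
    simp [max_eq_left (by linarith : y^2 - s ≤ 0)]
  have e2 : ∫ y in r0..1, y * max 0 (y^2 - s) * f (y^2)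
      = ∫ y in r0..1, (y * (y^2 - s) * f (y^2)) := by
    apply intervalIntegral.integral_congr
    intro y hy
    rw [Set.uIcc_of_le hr0b] at hy
    have : s ≤ y^2 := by nlinarith [hy.1, hy.2]
    simp [max_eq_right (by linarith : (0:ℝ) ≤ y^2 - s)]
  rw [e1, e2, zero_add]

lemma intJ0 (s : ℝ) (h0 : 0 ≤ s) (h1 : s ≤ 1) :
    ∫ x in B1, max 0 (‖x‖^2 - s) = π * (1-s)^2 / 2 := by
  rw [show (∫ x in B1, max 0 (‖x‖^2 - s)) = 2*π*∫ y in (0:ℝ)..1, y * max 0 (y^2 - s) from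
    radial_int (fun r => max 0 (r^2 - s))]
  have h := split_int (fun _ => 1) continuous_const s h0 h1
  simp only [mul_one] at h
  rw [h]
  set r0 := Real.sqrt s with hr0def
  have hr0 : r0^2 = s := Real.sq_sqrt h0
  have e : ∫ y in r0..1, (y * (y^2 - s)) = ∫ y in r0..1, (y^3 - s*y) := by
    apply intervalIntegral.integral_congr; intro y _; ring
  rw [e, intervalIntegral.integral_sub ((by fun_prop : Continuous fun y:ℝ => y^3).intervalIntegrable _ _)
    ((by fun_prop : Continuous fun y:ℝ => s*y).intervalIntegrable _ _),
    intervalIntegral.integral_const_mul, integral_pow, integral_id]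
  have h4 : r0^4 = s^2 := by rw [show r0^4 = (r0^2)^2 by ring, hr0]
  rw [h4, hr0]
  push_cast
  ring

lemma intJ1 (s : ℝ) (h0 : 0 ≤ s) (h1 : s ≤ 1) :
    ∫ x in B1, (max 0 (‖x‖^2 - s))^2 = π * (1-s)^3 / 3 := by
  rw [show (∫ x in B1, (max 0 (‖x‖^2 - s))^2) = 2*π*∫ y in (0:ℝ)..1, y * (max 0 (y^2 - s))^2 from
    radial_int (fun r => (max 0 (r^2 - s))^2)]
  have h := split_int (fun u => max 0 (u - s)) (by fun_prop) s h0 h1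
  have h' : ∫ y in (0:ℝ)..1, y * (max 0 (y^2 - s))^2
      = ∫ y in (Real.sqrt s)..1, (y * (y^2 - s) * max 0 (y^2 - s)) := by
    rw [← h]; apply intervalIntegral.integral_congr; intro y _; ring
  rw [h']
  set r0 := Real.sqrt s with hr0def
  have hr0 : r0^2 = s := Real.sq_sqrt h0
  have hr0b : r0 ≤ 1 := Real.sqrt_le_one.mpr h1
  have e : ∫ y in r0..1, (y * (y^2 - s) * max 0 (y^2 - s))
      = ∫ y in r0..1, (y^5 - (2*s)*y^3 + s^2*y) := by
    apply intervalIntegral.integral_congr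
    intro y hy
    rw [Set.uIcc_of_le hr0b] at hy
    have : s ≤ y^2 := by nlinarith [hy.1, hy.2, Real.sqrt_nonneg s]
    show y * (y^2 - s) * max 0 (y^2 - s) = y^5 - 2*s*y^3 + s^2*y
    rw [max_eq_right (by linarith : (0:ℝ) ≤ y^2 - s)]
    ring
  rw [e, intervalIntegral.integral_add (((by fun_prop : Continuous fun y:ℝ => y^5 - (2*s)*y^3).intervalIntegrable _ _))
    ((by fun_prop : Continuous fun y:ℝ => s^2*y).intervalIntegrable _ _),
    intervalIntegral.integral_sub ((by fun_prop : Continuous fun y:ℝ => y^5).intervalIntegrable _ _)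
    ((by fun_prop : Continuous fun y:ℝ => (2*s)*y^3).intervalIntegrable _ _),
    intervalIntegral.integral_const_mul, intervalIntegral.integral_const_mul,
    integral_pow, integral_pow, integral_id]
  have h4 : r0^4 = s^2 := by rw [show r0^4 = (r0^2)^2 by ring, hr0]
  have h6 : r0^6 = s^3 := by rw [show r0^6 = (r0^2)^3 by ring, hr0]
  rw [h6, h4, hr0]
  push_cast
  ring


lemma hB1meas : MeasurableSet B1 := by unfold B1; exact measurableSet_ball

lemma contIntOn {f : Pt → ℝ} (hf : Continuous f) : IntegrableOn f B1 := by
  refine ((hf.continuousOn).integrableOn_compact (isCompact_closedBall (0:Pt) 1)).mono_set ?_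
  unfold B1; exact ball_subset_closedBall

lemma pt_le (r l : ℝ) (hr : 0 ≤ r) : (max 0 l - l)^2 ≤ (r - l)^2 := by
  rcases le_total l 0 with h | h
  · rw [max_eq_left h]; nlinarith
  · rw [max_eq_right h]; nlinarith [sq_nonneg (r - l)]

lemma pt_eq (r l : ℝ) (hr : 0 ≤ r) (h : (r - l)^2 = (max 0 l - l)^2) : r = max 0 l := by
  rcases le_total l 0 with hl | hl
  · rw [max_eq_left hl] at h ⊢
    have h2 : r * (r - 2*l) = 0 := by nlinarith
    rcases mul_eq_zero.1 h2 with h3 | h3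
    · exact h3
    · linarith
  · rw [max_eq_right hl] at h ⊢
    have h4 : (r - l)^2 = 0 := by nlinarith
    have := pow_eq_zero_iff (n := 2) (by norm_num) |>.1 h4
    linarith [sub_eq_zero.1 this]

lemma pt_sq (c a : ℝ) : (c * max 0 a - c * a)^2 - (c*a)^2 = -(c * max 0 a)^2 := by
  rcases le_total a 0 with h | h
  · rw [max_eq_left h]; ring
  · rw [max_eq_right h]; ring

lemma cmax (c a : ℝ) (hc : 0 ≤ c) : c * max 0 a = max 0 (c * a) := by
  rcases le_total a 0 with h | h
  · rw [max_eq_left h, max_eq_left (by nlinarith), mul_zero]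
  · rw [max_eq_right h, max_eq_right (by nlinarith)]


theorem stmt15 (Ω₁ α ε : ℝ) (hΩ : 0 < Ω₁) (hα : 0 < α) (hε : 0 < ε)
    (hsmall : 4 * ε ^ α < Real.sqrt π * Ω₁) :
    (∀ x : Pt, 0 ≤ rhoTFeps Ω₁ α ε x) ∧
    (∫ x in B1, rhoTFeps Ω₁ α ε x) = 1 ∧
    (∀ ρ : Pt → ℝ, tfAdm ρ →
      tfEpsEnergy Ω₁ α ε (rhoTFeps Ω₁ α ε) ≤ tfEpsEnergy Ω₁ α ε ρ ∧
      (tfEpsEnergy Ω₁ α ε ρ = tfEpsEnergy Ω₁ α ε (rhoTFeps Ω₁ α ε) ↔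
        ρ =ᵐ[volume.restrict B1] rhoTFeps Ω₁ α ε)) ∧
    tfEpsEnergy Ω₁ α ε (rhoTFeps Ω₁ α ε) =
      -(Ω₁ ^ 2 / 4) * (1 - 8 * ε ^ α / (3 * Real.sqrt π * Ω₁)) := by
  have hπpos := Real.pi_pos
  set sπ := Real.sqrt π with hsπdef
  have hsπ : 0 < sπ := Real.sqrt_pos.mpr hπpos
  have hsπ2 : sπ ^ 2 = π := Real.sq_sqrt hπpos.le
  have hεα : (0:ℝ) < ε ^ α := Real.rpow_pos_of_pos hε α
  have hE0 : (0:ℝ) < ε ^ (2*α) := Real.rpow_pos_of_pos hε _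
  have hE : ε ^ (2*α) = (ε ^ α)^2 := by
    rw [← Real.rpow_natCast (ε ^ α) 2, ← Real.rpow_mul hε.le]
    norm_num [mul_comm]
  set s : ℝ := (Reps Ω₁ α ε)^2 with hsdef
  have hts : 1 - s = 4 * ε ^ α / (sπ * Ω₁) := by
    rw [hsdef, Reps, Real.sq_sqrt, hsπdef]
    · ring
    · have : 4 * ε ^ α / (Real.sqrt π * Ω₁) ≤ 1 := by
        rw [div_le_one (by positivity)]; linarith
      linarith
  have hs0 : 0 ≤ s := sq_nonneg _
  have hs1 : s ≤ 1 := by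
    have : 0 ≤ 1 - s := by rw [hts]; positivity
    linarith
  set c : ℝ := Ω₁^2/(8*ε^(2*α)) with hcdef
  have hc0 : 0 < c := by positivity
  have hrho : rhoTFeps Ω₁ α ε = fun x => c * max 0 (‖x‖^2 - s) := rfl
  have hcont : Continuous (rhoTFeps Ω₁ α ε) := by rw [hrho]; fun_prop
  have hnn : ∀ x : Pt, 0 ≤ rhoTFeps Ω₁ α ε x := fun x => by
    rw [hrho]; positivity
  -- mass
  have hmass : (∫ x in B1, rhoTFeps Ω₁ α ε x) = 1 := by
    rw [hrho]
    rw [integral_const_mul, intJ0 s hs0 hs1, hts, hcdef, hE, ← hsπ2]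
    field_simp
    ring
  -- the linear part
  set lf : Pt → ℝ := fun x => c * (‖x‖^2 - s) with hlf
  have hlcont : Continuous lf := by rw [hlf]; fun_prop
  have hl2int : IntegrableOn (fun x => (lf x)^2) B1 := contIntOn (by fun_prop)
  have hrhoeq : ∀ x : Pt, rhoTFeps Ω₁ α ε x = max 0 (lf x) := by
    intro x
    rw [hrho, hlf]
    exact cmax c _ hc0.le
  -- key identity
  have key : ∀ ρ : Pt → ℝ, tfAdm ρ →
      IntegrableOn (fun x => (ρ x - lf x)^2) B1 ∧
      tfEpsEnergy Ω₁ α ε ρ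
        = ε^(2*α) * ((∫ x in B1, (ρ x - lf x)^2) - (∫ x in B1, (lf x)^2) - 2*(c*s)) := by
    intro ρ ⟨hρ, hρ2, hρnn, hm⟩
    have hℓρ : IntegrableOn (fun x => lf x * ρ x) B1 := by
      refine Integrable.bdd_mul (c := |c| * (1 + s)) hρ hlcont.aestronglyMeasurable ?_
      refine (ae_restrict_iff' hB1meas).2 (Eventually.of_forall fun x hx => ?_)
      have hx1 : ‖x‖ < 1 := by
        have := hx; unfold B1 at this; simpa [mem_ball_zero_iff] using this
      have hx0 : (0:ℝ) ≤ ‖x‖ := norm_nonneg x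
      rw [hlf]
      simp only [Real.norm_eq_abs, abs_mul]
      refine mul_le_mul_of_nonneg_left ?_ (abs_nonneg c)
      rw [abs_le]
      constructor <;> nlinarith
    have hdiff : IntegrableOn (fun x => (ρ x - lf x)^2) B1 := by
      have heq : (fun x => (ρ x - lf x)^2)
          = fun x => (ρ x^2 - 2*(lf x * ρ x)) + (lf x)^2 := funext fun x => by ring
      rw [heq]
      exact (hρ2.sub (hℓρ.const_mul 2)).add hl2int
    refine ⟨hdiff, ?_⟩
    have hstep : ∀ x : Pt, ρ x^2 - Ω₁^2*‖x‖^2*ρ x/(4*ε^(2*α))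
        = ((ρ x - lf x)^2 - (lf x)^2) - (2*(c*s))*ρ x := by
      intro x
      rw [hlf, hcdef]
      field_simp
      ring
    rw [tfEpsEnergy]
    congr 1
    rw [show (fun x : Pt => (ρ x)^2 - Ω₁^2*‖x‖^2*ρ x/(4*ε^(2*α)))
        = fun x : Pt => (((ρ x - lf x)^2 - (lf x)^2) - (2*(c*s))*ρ x) from funext hstep]
    have e1 : (∫ x in B1, (((ρ x - lf x)^2 - (lf x)^2) - (2*(c*s))*ρ x))
        = (∫ x in B1, ((ρ x - lf x)^2 - (lf x)^2)) - ∫ x in B1, (2*(c*s))*ρ x :=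
      integral_sub (hdiff.sub hl2int) (hρ.const_mul _)
    have e2 : (∫ x in B1, ((ρ x - lf x)^2 - (lf x)^2))
        = (∫ x in B1, (ρ x - lf x)^2) - ∫ x in B1, (lf x)^2 := integral_sub hdiff hl2int
    rw [e1, e2, integral_const_mul, hm, mul_one]
  -- admissibility of the minimizer
  have hadmstar : tfAdm (rhoTFeps Ω₁ α ε) :=
    ⟨contIntOn hcont, contIntOn (by fun_prop), Eventually.of_forall fun x => hnn x, hmass⟩
  obtain ⟨hdiffstar, keystar⟩ := key _ hadmstar
  -- value of ∫ (ρ* - ℓ)² - ∫ ℓ²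
  have hIstar : (∫ x in B1, (rhoTFeps Ω₁ α ε x - lf x)^2) - (∫ x in B1, (lf x)^2)
      = -(c^2 * (π * (1-s)^3/3)) := by
    have e3 : (∫ x in B1, ((rhoTFeps Ω₁ α ε x - lf x)^2 - (lf x)^2))
        = (∫ x in B1, (rhoTFeps Ω₁ α ε x - lf x)^2) - ∫ x in B1, (lf x)^2 :=
      integral_sub hdiffstar hl2int
    rw [← e3]
    have hpt : ∀ x : Pt, (rhoTFeps Ω₁ α ε x - lf x)^2 - (lf x)^2
        = -((c * max 0 (‖x‖^2 - s))^2) := by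
      intro x
      rw [hrho, hlf]
      exact pt_sq c _
    simp only [hpt]
    rw [integral_neg]
    simp only [mul_pow]
    rw [integral_const_mul, intJ1 s hs0 hs1]
  -- final energy value
  have hval : tfEpsEnergy Ω₁ α ε (rhoTFeps Ω₁ α ε)
      = -(Ω₁ ^ 2 / 4) * (1 - 8 * ε ^ α / (3 * sπ * Ω₁)) := by
    rw [keystar]
    rw [show (∫ x in B1, (rhoTFeps Ω₁ α ε x - lf x)^2) - (∫ x in B1, (lf x)^2) - 2*(c*s)
        = -(c^2 * (π * (1-s)^3/3)) - 2*(c*s) by linarith [hIstar]]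
    have hsub : s = 1 - 4 * ε ^ α / (sπ * Ω₁) := by linarith [hts]
    rw [hsub, hcdef, hE, ← hsπ2]
    field_simp
    ring
  refine ⟨hnn, hmass, ?_, hval⟩
  intro ρ hadm
  obtain ⟨hρ, hρ2, hρnn, hm⟩ := hadm
  obtain ⟨hdiffρ, keyρ⟩ := key ρ ⟨hρ, hρ2, hρnn, hm⟩
  have hptle : ∀ᵐ x ∂(volume.restrict B1),
      (rhoTFeps Ω₁ α ε x - lf x)^2 ≤ (ρ x - lf x)^2 := by
    filter_upwards [hρnn] with x hx
    rw [hrhoeq x]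
    exact pt_le _ _ hx
  have hineq : (∫ x in B1, (rhoTFeps Ω₁ α ε x - lf x)^2) ≤ ∫ x in B1, (ρ x - lf x)^2 :=
    integral_mono_ae hdiffstar hdiffρ hptle
  constructor
  · rw [keystar, keyρ]
    have h2 := hE0
    nlinarith
  constructor
  · intro heq
    rw [keystar, keyρ] at heq
    have hIeq : (∫ x in B1, (ρ x - lf x)^2) = ∫ x in B1, (rhoTFeps Ω₁ α ε x - lf x)^2 := by
      have := mul_left_cancel₀ hE0.ne' heq
      linarith
    have hzero : ∫ x in B1, ((ρ x - lf x)^2 - (rhoTFeps Ω₁ α ε x - lf x)^2) = 0 := by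
      have e4 : (∫ x in B1, ((ρ x - lf x)^2 - (rhoTFeps Ω₁ α ε x - lf x)^2))
          = (∫ x in B1, (ρ x - lf x)^2) - ∫ x in B1, (rhoTFeps Ω₁ α ε x - lf x)^2 :=
        integral_sub hdiffρ hdiffstar
      rw [e4]
      linarith
    have hnonneg : 0 ≤ᵐ[volume.restrict B1]
        fun x => (ρ x - lf x)^2 - (rhoTFeps Ω₁ α ε x - lf x)^2 := by
      filter_upwards [hptle] with x hx
      simpa [sub_nonneg] using hx
    have hae0 := (integral_eq_zero_iff_of_nonneg_ae hnonneg (hdiffρ.sub hdiffstar)).1 hzero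
    filter_upwards [hae0, hρnn] with x hx0 hxnn
    have hx0' : (ρ x - lf x)^2 = (rhoTFeps Ω₁ α ε x - lf x)^2 := by
      have : (ρ x - lf x)^2 - (rhoTFeps Ω₁ α ε x - lf x)^2 = 0 := hx0
      linarith
    rw [hrhoeq x] at hx0' ⊢
    exact pt_eq _ _ hxnn hx0'
  · intro hae
    rw [tfEpsEnergy, tfEpsEnergy]
    congr 1
    apply integral_congr_ae
    filter_upwards [hae] with x hx
    rw [hx]
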